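/- Let S = (d, N_1, ..., N_L) be a neural network architecture with N_0 := d, let ρ : ℝ → ℝ be locally Lipschitz continuous, and let Ω ⊆ ℝ^d be nonempty. If V is a real vector subspace of the space of functions Ω → ℝ^{N_L} with V ⊆ RNN_ρ^Ω(S), then dim V ≤ Σ_{ℓ=1}^L (N_{ℓ-1} + 1) N_ℓ. -/

import Mathlib

open scoped BigOperators ENNReal NNReal Pointwise
open Filter MeasureTheory Topology

abbrev NNLayer (N : ℕ → ℕ) (ℓ : ℕ) : Type :=
  (Fin (N (ℓ + 1)) → Fin (N ℓ) → ℝ) × (Fin (N (ℓ + 1)) → ℝ)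

abbrev NNParams (L : ℕ) (N : ℕ → ℕ) : Type :=
  (ℓ : Fin L) → NNLayer N ℓ.val

noncomputable def nnAffine {N : ℕ → ℕ} {ℓ : ℕ} (W : NNLayer N ℓ) (x : Fin (N ℓ) → ℝ) :
    Fin (N (ℓ + 1)) → ℝ :=
  fun i => (∑ j, W.1 i j * x j) + W.2 i

noncomputable def nnHidden (ρ : ℝ → ℝ) :
    (L : ℕ) → (N : ℕ → ℕ) → NNParams L N → (Fin (N 0) → ℝ) → Fin (N L) → ℝ
  | 0, _, _, x => x
  | L + 1, N, Φ, x =>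
      nnHidden ρ L (fun k => N (k + 1))
        (fun ℓ => Φ ⟨ℓ.val + 1, Nat.succ_lt_succ ℓ.isLt⟩)
        (fun i => ρ (nnAffine (Φ ⟨0, Nat.succ_pos L⟩) x i))

noncomputable def nnRealization (ρ : ℝ → ℝ) :
    (L : ℕ) → (N : ℕ → ℕ) → NNParams L N → (Fin (N 0) → ℝ) → Fin (N L) → ℝ
  | 0, _, _, x => x
  | L + 1, N, Φ, x =>
      nnAffine (Φ ⟨L, Nat.lt_succ_self L⟩)
        (nnHidden ρ L N (fun ℓ => Φ ⟨ℓ.val, Nat.lt_succ_of_lt ℓ.isLt⟩) x)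

noncomputable def nnRealizationScalar (ρ : ℝ → ℝ) (L : ℕ) (N : ℕ → ℕ) (h : N L = 1)
    (Φ : NNParams L N) (x : Fin (N 0) → ℝ) : ℝ :=
  nnRealization ρ L N Φ x ⟨0, by rw [h]; exact Nat.one_pos⟩

noncomputable def nnScalingNorm {L : ℕ} {N : ℕ → ℕ} (Φ : NNParams L N) : ℝ :=
  ⨆ ℓ : Fin L, ‖(Φ ℓ).1‖

noncomputable def nnTotalNorm {L : ℕ} {N : ℕ → ℕ} (Φ : NNParams L N) : ℝ :=
  nnScalingNorm Φ + ⨆ ℓ : Fin L, ‖(Φ ℓ).2‖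

lemma contDiff_nnAffine {N : ℕ → ℕ} {ℓ : ℕ} :
    ContDiff ℝ 1 (fun p : NNLayer N ℓ × (Fin (N ℓ) → ℝ) => nnAffine p.1 p.2) := by
  rw [contDiff_pi]
  intro i
  simp only [nnAffine]
  refine ContDiff.add (ContDiff.sum fun j _ => ContDiff.mul ?_ ?_) ?_
  · exact (contDiff_apply_apply ℝ ℝ i j).comp (contDiff_fst.comp contDiff_fst)
  · exact (contDiff_apply ℝ ℝ j).comp contDiff_snd
  · exact (contDiff_apply ℝ ℝ i).comp (contDiff_snd.comp contDiff_fst)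

lemma locallyLipschitz_pi {α : Type*} [PseudoEMetricSpace α] {ι : Type*} [Fintype ι]
    {β : ι → Type*} [∀ i, PseudoEMetricSpace (β i)] {f : (i : ι) → α → β i}
    (hf : ∀ i, LocallyLipschitz (f i)) : LocallyLipschitz (fun a i => f i a) := by
  intro x
  choose K t ht hK using fun i => hf i x
  refine ⟨Finset.univ.sup K, ⋂ i, t i, Filter.iInter_mem.2 ht, fun a ha b hb => ?_⟩
  rw [edist_pi_def]
  refine Finset.sup_le fun i _ => ?_
  calc edist (f i a) (f i b) ≤ K i * edist a b :=
        hK i (Set.mem_iInter.1 ha i) (Set.mem_iInter.1 hb i)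
    _ ≤ _ := mul_le_mul_left (ENNReal.coe_le_coe.2 (Finset.le_sup (Finset.mem_univ i))) _

lemma locLip_nnHidden (ρ : ℝ → ℝ) (hρ : LocallyLipschitz ρ) :
    ∀ (L : ℕ) (N : ℕ → ℕ),
      LocallyLipschitz (fun p : NNParams L N × (Fin (N 0) → ℝ) => nnHidden ρ L N p.1 p.2)
  | 0, N => by
    exact (LipschitzWith.prod_snd).locallyLipschitz
  | L + 1, N => by
    have IH := locLip_nnHidden ρ hρ L (fun k => N (k + 1))
    set g : NNParams (L + 1) N × (Fin (N 0) → ℝ) →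
        NNParams L (fun k => N (k + 1)) × (Fin (N 1) → ℝ) :=
      fun p => (fun ℓ : Fin L => p.1 ⟨ℓ.val + 1, Nat.succ_lt_succ ℓ.isLt⟩,
        fun i => ρ (nnAffine (p.1 ⟨0, Nat.succ_pos L⟩) p.2 i)) with hg
    have hg1 : LocallyLipschitz (fun p : NNParams (L + 1) N × (Fin (N 0) → ℝ) =>
        (fun ℓ : Fin L => p.1 ⟨ℓ.val + 1, Nat.succ_lt_succ ℓ.isLt⟩ :
          NNParams L (fun k => N (k + 1)))) := by
      refine (contDiff_pi.2 fun ℓ => ?_ : ContDiff ℝ 1 _).locallyLipschitz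
      exact ((ContinuousLinearMap.proj (R := ℝ) (φ := fun k : Fin (L + 1) => NNLayer N k.val)
        ⟨ℓ.val + 1, Nat.succ_lt_succ ℓ.isLt⟩).contDiff).comp contDiff_fst
    have hg2 : LocallyLipschitz (fun p : NNParams (L + 1) N × (Fin (N 0) → ℝ) =>
        fun i : Fin (N 1) => ρ (nnAffine (p.1 ⟨0, Nat.succ_pos L⟩) p.2 i)) := by
      refine locallyLipschitz_pi fun i => hρ.comp ?_
      have hpair : ContDiff ℝ 1 (fun p : NNParams (L + 1) N × (Fin (N 0) → ℝ) =>
          ((p.1 ⟨0, Nat.succ_pos L⟩, p.2) : NNLayer N 0 × (Fin (N 0) → ℝ))) :=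
        ContDiff.prodMk (((ContinuousLinearMap.proj (R := ℝ) (φ := fun k : Fin (L + 1) => NNLayer N k.val)
          ⟨0, Nat.succ_pos L⟩).contDiff).comp contDiff_fst) contDiff_snd
      exact ((LipschitzWith.eval i).locallyLipschitz).comp
        ((contDiff_nnAffine.comp hpair).locallyLipschitz)
    exact IH.comp (hg1.prodMk hg2)

lemma locLip_nnRealization (ρ : ℝ → ℝ) (hρ : LocallyLipschitz ρ) (L : ℕ) (N : ℕ → ℕ) :
    LocallyLipschitz (fun p : NNParams L N × (Fin (N 0) → ℝ) => nnRealization ρ L N p.1 p.2) := by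
  cases L with
  | zero => exact (LipschitzWith.prod_snd).locallyLipschitz
  | succ L =>
    have hinit : ContDiff ℝ 1 (fun p : NNParams (L + 1) N × (Fin (N 0) → ℝ) =>
        ((fun ℓ : Fin L => p.1 ⟨ℓ.val, Nat.lt_succ_of_lt ℓ.isLt⟩, p.2) :
          NNParams L N × (Fin (N 0) → ℝ))) :=
      ContDiff.prodMk (contDiff_pi.2 fun ℓ : Fin L => ((ContinuousLinearMap.proj (R := ℝ)
        (φ := fun k : Fin (L + 1) => NNLayer N k.val)
        ⟨ℓ.val, Nat.lt_succ_of_lt ℓ.isLt⟩).contDiff).comp contDiff_fst) contDiff_snd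
    have hhid := (locLip_nnHidden ρ hρ L N).comp hinit.locallyLipschitz
    have hlast : ContDiff ℝ 1 (fun p : NNParams (L + 1) N × (Fin (N 0) → ℝ) =>
        p.1 ⟨L, Nat.lt_succ_self L⟩) :=
      ((ContinuousLinearMap.proj (R := ℝ) (φ := fun k : Fin (L + 1) => NNLayer N k.val)
        ⟨L, Nat.lt_succ_self L⟩).contDiff).comp contDiff_fst
    have key : (fun p : NNParams (L + 1) N × (Fin (N 0) → ℝ) =>
        nnRealization ρ (L + 1) N p.1 p.2) =
        (fun q : NNLayer N L × (Fin (N L) → ℝ) => nnAffine q.1 q.2) ∘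
          (fun p : NNParams (L + 1) N × (Fin (N 0) → ℝ) =>
            (p.1 ⟨L, Nat.lt_succ_self L⟩,
              nnHidden ρ L N (fun ℓ : Fin L => p.1 ⟨ℓ.val, Nat.lt_succ_of_lt ℓ.isLt⟩) p.2)) := rfl
    rw [key]
    exact contDiff_nnAffine.locallyLipschitz.comp (hlast.locallyLipschitz.prodMk hhid)

lemma exists_finset_inf_ker {ι W : Type*} [AddCommGroup W] [Module ℝ W] [FiniteDimensional ℝ W]
    (ψ : ι → W →ₗ[ℝ] ℝ) :
    ∃ F : Finset ι, ∀ w : W, (∀ i ∈ F, ψ i w = 0) → ∀ i, ψ i w = 0 := by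
  classical
  set K : Finset ι → Submodule ℝ W := fun F => ⨅ i ∈ F, LinearMap.ker (ψ i) with hKdef
  set D : Set ℕ := Set.range fun F => Module.finrank ℝ (K F) with hDdef
  have hD : D.Nonempty := ⟨_, ⟨∅, rfl⟩⟩
  obtain ⟨F, hF⟩ := Nat.sInf_mem hD
  refine ⟨F, fun w hw i => ?_⟩
  by_contra hne
  have hwK : w ∈ K F := by
    simp only [hKdef, Submodule.mem_iInf, LinearMap.mem_ker]
    exact hw
  have hle : K (insert i F) ≤ K F := by
    refine le_iInf fun j => le_iInf fun hj => ?_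
    exact iInf_le_of_le j (iInf_le_of_le (Finset.mem_insert_of_mem hj) le_rfl)
  have hwK' : w ∉ K (insert i F) := by
    intro hmem
    have := (Submodule.mem_iInf _).1 hmem i
    exact hne ((Submodule.mem_iInf _).1 this (Finset.mem_insert_self i F))
  have hlt : K (insert i F) < K F := lt_of_le_of_ne hle (fun h => hwK' (h ▸ hwK))
  have h2 : Module.finrank ℝ (K (insert i F)) < sInf D :=
    hF ▸ Submodule.finrank_lt_finrank_of_lt hlt
  have h3 : sInf D ≤ Module.finrank ℝ (K (insert i F)) := Nat.sInf_le ⟨insert i F, rfl⟩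
  omega

/-- The set of realizations of networks with architecture `(N 0, …, N L)`
and activation `ρ`, as functions on `Ω`. -/
def RNNset (ρ : ℝ → ℝ) (L : ℕ) (N : ℕ → ℕ) (Ω : Set (Fin (N 0) → ℝ)) :
    Set (Ω → Fin (N L) → ℝ) :=
  {f | ∃ Φ : NNParams L N, ∀ x : Ω, f x = nnRealization ρ L N Φ x.val}

/-- A vector subspace contained in the set of realizations has dimension at
most the number of network parameters. -/
theorem stmt13 (L : ℕ) (hL : 1 ≤ L) (N : ℕ → ℕ) (hN : ∀ ℓ ≤ L, 0 < N ℓ)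
    (ρ : ℝ → ℝ) (hρ : LocallyLipschitz ρ)
    (Ω : Set (Fin (N 0) → ℝ)) (hΩ : Ω.Nonempty)
    (V : Submodule ℝ (Ω → Fin (N L) → ℝ))
    (hV : (V : Set (Ω → Fin (N L) → ℝ)) ⊆ RNNset ρ L N Ω) :
    Module.rank ℝ V ≤ (∑ ℓ ∈ Finset.range L, (N ℓ + 1) * N (ℓ + 1) : ℕ) := by
  classical
  apply rank_le
  intro s hs
  set P : ℕ := ∑ ℓ ∈ Finset.range L, (N ℓ + 1) * N (ℓ + 1) with hPdef
  -- linearly independent family of functions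
  have hg : LinearIndependent ℝ (fun i : s => ((i : V) : Ω → Fin (N L) → ℝ)) :=
    hs.map' V.subtype V.ker_subtype
  set W : Submodule ℝ (Ω → Fin (N L) → ℝ) :=
    Submodule.span ℝ (Set.range fun i : s => ((i : V) : Ω → Fin (N L) → ℝ)) with hWdef
  haveI : FiniteDimensional ℝ W := FiniteDimensional.span_of_finite ℝ (Set.finite_range _)
  -- evaluation functionals restricted to W
  set ψ : (Ω × Fin (N L)) → (W →ₗ[ℝ] ℝ) := fun z =>
    (((LinearMap.proj (R := ℝ) (φ := fun _ : Fin (N L) => ℝ) z.2).comp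
      (LinearMap.proj (R := ℝ) (φ := fun _ : ↥Ω => Fin (N L) → ℝ) z.1)).comp
        W.subtype : W →ₗ[ℝ] ℝ) with hψdef
  obtain ⟨F, hF⟩ := exists_finset_inf_ker ψ
  -- evaluation map at the finitely many points
  set E : (Ω → Fin (N L) → ℝ) →ₗ[ℝ] (↥F → ℝ) :=
    LinearMap.pi fun z : ↥F =>
      (LinearMap.proj (R := ℝ) (φ := fun _ : Fin (N L) => ℝ) z.val.2).comp
        (LinearMap.proj (R := ℝ) (φ := fun _ : ↥Ω => Fin (N L) → ℝ) z.val.1) with hEdef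
  have hdisj : Disjoint W (LinearMap.ker E) := by
    rw [Submodule.disjoint_def]
    intro w hwW hwE
    have h0 : ∀ z : Ω × Fin (N L), ψ z ⟨w, hwW⟩ = 0 := by
      apply hF
      intro z hz
      have := congrFun (LinearMap.mem_ker.1 hwE) ⟨z, hz⟩
      simpa [hψdef, hEdef] using this
    funext x k
    exact h0 (x, k)
  have hEg : LinearIndependent ℝ
      (E ∘ fun i : s => ((i : V) : Ω → Fin (N L) → ℝ)) := hg.map (by rwa [← hWdef])
  set S : Submodule ℝ (↥F → ℝ) :=
    Submodule.span ℝ (Set.range (E ∘ fun i : s => ((i : V) : Ω → Fin (N L) → ℝ))) with hSdef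
  haveI : FiniteDimensional ℝ S := FiniteDimensional.span_of_finite ℝ (Set.finite_range _)
  have hfinr : Module.finrank ℝ S = s.card := by
    rw [hSdef, finrank_span_eq_card hEg, Fintype.card_coe]
  -- the parameter-to-values map
  set T : NNParams L N → (↥F → ℝ) :=
    fun Φ z => nnRealization ρ L N Φ (z.val.1 : Fin (N 0) → ℝ) z.val.2 with hTdef
  have hT : LocallyLipschitz T := by
    apply locallyLipschitz_pi
    intro z
    exact (LipschitzWith.eval z.val.2).locallyLipschitz.comp
      ((locLip_nnRealization ρ hρ L N).comp
        (LocallyLipschitz.prodMk_right (z.val.1 : Fin (N 0) → ℝ)))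
  -- S is contained in the range of T
  have hsub : (S : Set (↥F → ℝ)) ⊆ Set.range T := by
    have h1 : S ≤ Submodule.map E V := by
      rw [hSdef, Submodule.span_le]
      rintro _ ⟨i, rfl⟩
      exact ⟨((i : V) : Ω → Fin (N L) → ℝ), (i : V).2, rfl⟩
    intro y hy
    obtain ⟨f, hfV, rfl⟩ := h1 hy
    obtain ⟨Φ, hΦ⟩ := hV hfV
    refine ⟨Φ, ?_⟩
    funext z
    simp only [hTdef, hEdef, LinearMap.pi_apply, LinearMap.coe_comp, Function.comp_apply,
      LinearMap.proj_apply]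
    rw [hΦ z.val.1]
  -- Hausdorff dimension computations
  have hd1 : dimH (S : Set (↥F → ℝ)) = (s.card : ℝ≥0∞) := by
    have h2 : (S : Set (↥F → ℝ)) = Subtype.val '' (Set.univ : Set S) := by
      rw [Set.image_univ, Subtype.range_coe]
    rw [h2, (isometry_subtype_coe).dimH_image, Real.dimH_univ_eq_finrank, hfinr]
  have hd2 : dimH (Set.range T) ≤ (Module.finrank ℝ (NNParams L N) : ℝ≥0∞) := by
    refine (dimH_range_le_of_locally_lipschitzOn hT).trans_eq ?_
    exact Real.dimH_univ_eq_finrank _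
  have hfinP : Module.finrank ℝ (NNParams L N) = P := by
    rw [Module.finrank_pi_fintype]
    rw [hPdef, ← Fin.sum_univ_eq_sum_range (fun ℓ => (N ℓ + 1) * N (ℓ + 1)) L]
    refine Finset.sum_congr rfl fun ℓ _ => ?_
    rw [Module.finrank_prod, Module.finrank_pi_fintype]
    simp [Module.finrank_fintype_fun_eq_card]
    ring
  have hchain : (s.card : ℝ≥0∞) ≤ (P : ℝ≥0∞) := by
    calc (s.card : ℝ≥0∞) = dimH (S : Set (↥F → ℝ)) := hd1.symm
      _ ≤ dimH (Set.range T) := dimH_mono hsub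
      _ ≤ (Module.finrank ℝ (NNParams L N) : ℝ≥0∞) := hd2
      _ = (P : ℝ≥0∞) := by rw [hfinP]
  exact_mod_cast hchain
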